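/- Let c, c' > 0, 0 < ρ₁ < ρ₂ < 1, M > 0, let S ⊆ ℂⁿ be open, and let f : ℂ × ℂ × ℂⁿ → ℂ be holomorphic on V' × S where V' = {(z, w) : 0 < |z| < c, 0 < |w| < c'}. Suppose that for all s ∈ S: |f(z, w, s)| ≤ M whenever ρ₁c ≤ |z| ≤ ρ₂c, and |f(z, w, s)| ≤ M whenever ρ₁c' ≤ |w| ≤ ρ₂c'. Then there exists a unique function F holomorphic on {(z, w) : |z| < ρ₂c, |w| < ρ₂c'} × S such that F = f on {(z, w) : 0 < |z| < ρ₂c, 0 < |w| < ρ₂c'} × S. -/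

import Mathlib

open Metric Set Filter Complex Topology MeasureTheory

lemma punctured_ball_preconnected {R : ℝ} (hR : 0 < R) :
    IsPreconnected (ball (0:ℂ) R \ {0}) := by
  have himg : (fun p : ℝ × ℝ => (p.1 : ℂ) * Complex.exp (p.2 * Complex.I)) ''
      (Ioo 0 R ×ˢ (univ : Set ℝ)) = ball (0:ℂ) R \ {0} := by
    ext z
    constructor
    · rintro ⟨⟨t, θ⟩, ⟨ht, -⟩, rfl⟩
      have habs : ‖((t : ℂ) * Complex.exp (θ * Complex.I))‖ = t := by
        simp [Complex.norm_exp, abs_of_pos ht.1]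
      constructor
      · rw [mem_ball, Complex.dist_eq, sub_zero, habs]; exact ht.2
      · simp only [mem_singleton_iff]
        intro h
        rw [h] at habs
        simp at habs
        exact absurd habs.symm ht.1.ne'
    · rintro ⟨hz, hz0⟩
      simp only [mem_singleton_iff] at hz0
      refine ⟨(‖z‖, z.arg), ⟨⟨?_, ?_⟩, trivial⟩, ?_⟩
      · exact norm_pos_iff.2 hz0
      · simpa [mem_ball, Complex.dist_eq] using hz
      · exact Complex.norm_mul_exp_arg_mul_I z
  rw [← himg]
  refine (IsPathConnected.image ?_ ?_).isConnected.isPreconnected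
  · refine Convex.isPathConnected ((convex_Ioo 0 R).prod convex_univ) ?_
    exact ⟨(R/2, 0), ⟨by constructor <;> [linarith; linarith], trivial⟩⟩
  · exact (Complex.continuous_ofReal.comp continuous_fst).mul
      (Complex.continuous_exp.comp ((Complex.continuous_ofReal.comp continuous_snd).mul
        continuous_const))

/-- Identity theorem wrapper. -/
lemma eqOn_zero_of_eqOn_open {u : ℂ → ℂ} {Ω V : Set ℂ} (hΩo : IsOpen Ω)
    (hΩc : IsPreconnected Ω) (hd : DifferentiableOn ℂ u Ω) (hVo : IsOpen V)
    {z₁ : ℂ} (hz₁ : z₁ ∈ V) (hVΩ : V ⊆ Ω) (hvan : EqOn u 0 V) : EqOn u 0 Ω := by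
  refine (hd.analyticOnNhd hΩo).eqOn_zero_of_preconnected_of_eventuallyEq_zero hΩc
    (hVΩ hz₁) ?_
  filter_upwards [hVo.mem_nhds hz₁] using hvan

/-- A holomorphic function bounded by `C` on `ball p₀ (8ε)` is Lipschitz with constant
`C/(2ε)` on `ball p₀ ε`. -/
lemma lipschitz_of_bounded_holo {H : Type*} [NormedAddCommGroup H] [NormedSpace ℂ H]
    {ψ : H → ℂ} {p₀ : H} {ε C : ℝ} (hε : 0 < ε)
    (hd : DifferentiableOn ℂ ψ (ball p₀ (8*ε)))
    (hb : ∀ p ∈ ball p₀ (8*ε), ‖ψ p‖ ≤ C) :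
    LipschitzOnWith (Real.toNNReal (C/(2*ε))) ψ (ball p₀ ε) := by
  have hC : 0 ≤ C := le_trans (norm_nonneg _)
    (hb p₀ (mem_ball_self (by linarith : (0:ℝ) < 8*ε)))
  rw [lipschitzOnWith_iff_dist_le_mul]
  intro u hu v hv
  rcases eq_or_ne u v with rfl | huv
  · simp
  have hd0 : 0 < dist u v := dist_pos.2 huv
  set d := dist u v with hdd
  have hd2 : d < 2*ε := by
    calc d ≤ dist u p₀ + dist v p₀ := dist_triangle_right u v p₀
    _ < ε + ε := add_lt_add hu hv
    _ = 2*ε := by ring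
  have hX : 0 < 2*ε/d := div_pos (by linarith) hd0
  set r : ℝ := 2*ε/d + 1 with hr
  have hr1 : 1 < r := by rw [hr]; linarith
  have hr0 : 0 < r := by linarith
  set φ : ℂ → ℂ := fun t => ψ (v + t • (u - v)) with hφ
  have hmap : ∀ t : ℂ, ‖t‖ ≤ r + 1/2 → v + t • (u - v) ∈ ball p₀ (8*ε) := by
    intro t ht
    rw [mem_ball]
    have h1 : dist (v + t • (u-v)) v = ‖t • (u-v)‖ := by
      rw [dist_eq_norm, add_sub_cancel_left]
    calc dist (v + t • (u-v)) p₀ ≤ dist (v + t • (u-v)) v + dist v p₀ := dist_triangle _ _ _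
      _ ≤ (r + 1/2) * d + ε := by
          rw [h1]
          refine add_le_add ?_ hv.le
          rw [norm_smul]
          have hn : ‖u - v‖ = d := by rw [hdd, dist_eq_norm]
          rw [hn]
          exact mul_le_mul_of_nonneg_right ht hd0.le
      _ = (2*ε/d)*d + (3/2)*d + ε := by rw [hr]; ring
      _ = 2*ε + (3/2)*d + ε := by rw [div_mul_cancel₀]; exact hd0.ne'
      _ < 8*ε := by linarith
  have hφd : DifferentiableOn ℂ φ (ball (0:ℂ) (r + 1/4)) := by
    refine DifferentiableOn.comp hd ?_ ?_
    · exact (differentiable_const v |>.add ((differentiable_id).smul_const (u - v))).differentiableOn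
    · intro t ht
      rw [mem_ball, dist_eq_norm, sub_zero] at ht
      exact hmap t (by linarith)
  have hcl : DiffContOnCl ℂ φ (ball (0:ℂ) r) := by
    refine DifferentiableOn.diffContOnCl ?_
    refine hφd.mono ?_
    rw [closure_ball (0:ℂ) hr0.ne']
    intro t ht
    rw [mem_closedBall, dist_eq_norm, sub_zero] at ht
    rw [mem_ball, dist_eq_norm, sub_zero]
    exact lt_of_le_of_lt ht (by linarith)
  have h1 : (∮ ζ in C(0, r), (ζ - 1)⁻¹ • φ ζ) = (2 * Real.pi * I) • φ 1 :=
    hcl.circleIntegral_sub_inv_smul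
      (by rw [mem_ball, dist_eq_norm, sub_zero, norm_one]; exact hr1)
  have h0 : (∮ ζ in C(0, r), (ζ - 0)⁻¹ • φ ζ) = (2 * Real.pi * I) • φ 0 :=
    hcl.circleIntegral_sub_inv_smul (by simp [hr0])
  have hcont : ContinuousOn φ (sphere (0:ℂ) r) := by
    refine (hφd.continuousOn).mono ?_
    intro t ht
    rw [mem_sphere, dist_eq_norm, sub_zero] at ht
    rw [mem_ball, dist_eq_norm, sub_zero, ht]
    linarith
  have hint1 : CircleIntegrable (fun ζ => (ζ - 1)⁻¹ • φ ζ) 0 r := by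
    refine ContinuousOn.circleIntegrable hr0.le ?_
    refine ContinuousOn.fun_smul ?_ hcont
    refine ContinuousOn.fun_inv₀ ((continuousOn_id.sub continuousOn_const)) ?_
    intro ζ hζ
    rw [mem_sphere, dist_eq_norm, sub_zero] at hζ
    intro h
    rw [sub_eq_zero] at h
    rw [h] at hζ
    rw [norm_one] at hζ
    linarith
  have hint0 : CircleIntegrable (fun ζ => (ζ - 0)⁻¹ • φ ζ) 0 r := by
    refine ContinuousOn.circleIntegrable hr0.le ?_
    refine ContinuousOn.fun_smul ?_ hcont
    refine ContinuousOn.fun_inv₀ ((continuousOn_id.sub continuousOn_const)) ?_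
    intro ζ hζ
    rw [mem_sphere, dist_eq_norm, sub_zero] at hζ
    intro h
    rw [sub_zero] at h
    rw [h] at hζ
    rw [norm_zero] at hζ
    linarith
  have hdiff : (∮ ζ in C(0, r), ((ζ - 1)⁻¹ - (ζ - 0)⁻¹) • φ ζ)
      = (2 * Real.pi * I) • (φ 1 - φ 0) := by
    have heq : (fun ζ => ((ζ - 1)⁻¹ - (ζ - 0)⁻¹) • φ ζ)
        = fun ζ => (ζ - 1)⁻¹ • φ ζ - (ζ - 0)⁻¹ • φ ζ := by
      funext ζ; rw [sub_smul]
    rw [heq, circleIntegral.integral_sub hint1 hint0, h1, h0, smul_sub]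
  have hbound : ‖∮ ζ in C(0, r), ((ζ - 1)⁻¹ - (ζ - 0)⁻¹) • φ ζ‖
      ≤ 2 * Real.pi * r * (C / ((r-1)*r)) := by
    refine circleIntegral.norm_integral_le_of_norm_le_const hr0.le ?_
    intro ζ hζ
    rw [mem_sphere, dist_eq_norm, sub_zero] at hζ
    have hζ1 : ζ - 1 ≠ 0 := by
      intro h; rw [sub_eq_zero] at h; rw [h, norm_one] at hζ; linarith
    have hζ0 : ζ ≠ 0 := by
      intro h; rw [h, norm_zero] at hζ; linarith
    have hker : (ζ - 1)⁻¹ - (ζ - 0)⁻¹ = ((ζ - 1) * ζ)⁻¹ := by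
      rw [sub_zero, inv_sub_inv hζ1 hζ0]
      have : ζ - (ζ - 1) = 1 := by ring
      rw [this, one_div]
    rw [norm_smul, hker]
    have hrpos : (0:ℝ) < (r-1)*r := mul_pos (by linarith) hr0
    have habs1 : r - 1 ≤ ‖ζ - 1‖ := by
      calc r - 1 = ‖ζ‖ - ‖(1:ℂ)‖ := by rw [hζ, norm_one]
      _ ≤ ‖ζ - 1‖ := norm_sub_norm_le ζ 1
    have hφζ : ‖φ ζ‖ ≤ C := by
      refine hb _ (hmap ζ ?_)
      rw [hζ]; linarith
    have hnorm : ‖((ζ-1)*ζ)⁻¹‖ ≤ ((r-1)*r)⁻¹ := by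
      rw [norm_inv, norm_mul, hζ]
      refine inv_anti₀ hrpos ?_
      exact mul_le_mul_of_nonneg_right habs1 hr0.le
    calc ‖((ζ-1)*ζ)⁻¹‖ * ‖φ ζ‖ ≤ ((r-1)*r)⁻¹ * C :=
        mul_le_mul hnorm hφζ (norm_nonneg _) (inv_nonneg.2 hrpos.le)
      _ = C / ((r-1)*r) := by rw [div_eq_mul_inv, mul_comm]
  have hpi : (0:ℝ) < 2 * Real.pi := by positivity
  have key : dist (ψ u) (ψ v) ≤ C / (r - 1) := by
    have hφ1 : φ 1 = ψ u := by
      rw [hφ]; simp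
    have hφ0 : φ 0 = ψ v := by
      rw [hφ]; simp
    have hdist : dist (ψ u) (ψ v) = ‖φ 1 - φ 0‖ := by rw [hφ1, hφ0, dist_eq_norm]
    rw [hdist]
    have h2pi : ‖(2 * (Real.pi:ℂ) * I) • (φ 1 - φ 0)‖ = 2 * Real.pi * ‖φ 1 - φ 0‖ := by
      rw [norm_smul]
      congr 1
      simp
      exact Real.pi_pos.le
    rw [hdiff, h2pi] at hbound
    have step : 2 * Real.pi * ‖φ 1 - φ 0‖ ≤ 2 * Real.pi * (r * (C / ((r-1)*r))) := by
      calc 2 * Real.pi * ‖φ 1 - φ 0‖ ≤ 2 * Real.pi * r * (C / ((r-1)*r)) := hbound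
        _ = 2 * Real.pi * (r * (C / ((r-1)*r))) := by ring
    have step2 : ‖φ 1 - φ 0‖ ≤ r * (C / ((r-1)*r)) := le_of_mul_le_mul_left step hpi
    have heq : r * (C / ((r-1)*r)) = C / (r-1) := by
      have hne1 : r - 1 ≠ 0 := by intro h; rw [sub_eq_zero] at h; linarith [hr1, h]
      field_simp
    rw [heq] at step2
    exact step2
  have hrm : r - 1 = 2*ε/d := by rw [hr]; ring
  have hrr : C / (r - 1) = (C / (2*ε)) * d := by
    rw [hrm, div_div_eq_mul_div, div_mul_eq_mul_div]
  rw [Real.coe_toNNReal _ (div_nonneg hC (by linarith))]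
  rw [hrr] at key
  exact key

/-- If `Φ y θ` is continuous in `θ` for `y` near `x₀` and differentiable in `y` at `x₀`
for every `θ`, then `θ ↦ fderiv ℂ (Φ · θ) x₀` is strongly measurable
(finite-dimensional domain). -/
lemma stronglyMeasurable_fderiv_param {H : Type*} [NormedAddCommGroup H] [NormedSpace ℂ H]
    [FiniteDimensional ℂ H] {Φ : H → ℝ → ℂ} {x₀ : H} {δ : ℝ} (hδ : 0 < δ)
    (hc : ∀ y ∈ ball x₀ δ, Continuous (fun θ => Φ y θ))
    (hd : ∀ θ : ℝ, DifferentiableAt ℂ (fun y => Φ y θ) x₀) :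
    MeasureTheory.StronglyMeasurable (fun θ => fderiv ℂ (fun y => Φ y θ) x₀) := by
  classical
  set m := Module.finrank ℂ H with hm
  set b : Module.Basis (Fin m) ℂ H := Module.finBasis ℂ H with hb
  set E : Fin m → (H →L[ℂ] ℂ) := fun i =>
    (ContinuousLinearMap.proj i).comp (b.equivFunL : H →L[ℂ] (Fin m → ℂ)) with hE
  have key : ∀ θ : ℝ, fderiv ℂ (fun y => Φ y θ) x₀
      = ∑ i, (fderiv ℂ (fun y => Φ y θ) x₀ (b i)) • E i := by
    intro θ
    set L := fderiv ℂ (fun y => Φ y θ) x₀ with hL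
    refine ContinuousLinearMap.ext fun v => ?_
    have hv : v = ∑ i, b.equivFun v i • b i := (b.sum_equivFun v).symm
    rw [ContinuousLinearMap.sum_apply]
    conv_lhs => rw [hv]
    rw [map_sum]
    refine Finset.sum_congr rfl fun i _ => ?_
    rw [L.map_smul]
    have : E i v = b.equivFun v i := rfl
    rw [ContinuousLinearMap.smul_apply, this]
    rw [smul_eq_mul, smul_eq_mul, mul_comm]
  have : (fun θ => fderiv ℂ (fun y => Φ y θ) x₀)
      = fun θ => ∑ i, (fderiv ℂ (fun y => Φ y θ) x₀ (b i)) • E i := funext key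
  rw [this]
  refine Finset.stronglyMeasurable_fun_sum _ fun i _ => ?_
  -- strong measurability of each coefficient
  have hcoef : MeasureTheory.StronglyMeasurable
      (fun θ => fderiv ℂ (fun y => Φ y θ) x₀ (b i)) := by
    -- directional derivative as a pointwise limit
    obtain ⟨k₀, hk₀⟩ := exists_nat_gt (‖b i‖ / δ)
    have hk₀pos : ∀ k : ℕ, (0:ℝ) < (k + k₀ + 1) := by
      intro k; positivity
    set g : ℕ → ℝ → ℂ := fun k θ =>
      ((k + k₀ + 1 : ℕ) : ℂ) • (Φ (x₀ + (((k + k₀ + 1 : ℕ) : ℂ))⁻¹ • b i) θ - Φ x₀ θ)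
      with hg
    have hmem : ∀ k : ℕ, x₀ + (((k + k₀ + 1 : ℕ) : ℂ))⁻¹ • b i ∈ ball x₀ δ := by
      intro k
      rw [mem_ball, dist_eq_norm, add_sub_cancel_left, norm_smul, norm_inv]
      have h1 : ‖((k + k₀ + 1 : ℕ) : ℂ)‖ = ((k + k₀ + 1 : ℕ) : ℝ) := by
        rw [Complex.norm_natCast]
      rw [h1]
      have hpos : (0:ℝ) < ((k + k₀ + 1 : ℕ) : ℝ) := by positivity
      rw [inv_mul_eq_div, div_lt_iff₀ hpos]
      have h2 : ‖b i‖ < (k₀ : ℝ) * δ := (div_lt_iff₀ hδ).1 hk₀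
      have h3 : (k₀ : ℝ) * δ ≤ δ * ((k + k₀ + 1 : ℕ) : ℝ) := by
        push_cast
        nlinarith [Nat.cast_nonneg (α := ℝ) k, hδ.le]
      linarith
    have hgm : ∀ k : ℕ, MeasureTheory.StronglyMeasurable (g k) := by
      intro k
      refine Continuous.stronglyMeasurable ?_
      exact (continuous_const.fun_smul ((hc _ (hmem k)).sub (hc _ (mem_ball_self hδ))))
    refine stronglyMeasurable_of_tendsto atTop hgm ?_
    rw [tendsto_pi_nhds]
    intro θ
    have := (hd θ).hasFDerivAt.lim (b i) (c := fun k : ℕ => ((k + k₀ + 1 : ℕ) : ℂ))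
      (l := atTop) ?_
    · exact this
    · have : (fun k : ℕ => ‖((k + k₀ + 1 : ℕ) : ℂ)‖) = fun k : ℕ => ((k + k₀ + 1 : ℕ) : ℝ) := by
        funext k; rw [Complex.norm_natCast]
      rw [this]
      refine tendsto_atTop_atTop.2 fun C => ?_
      obtain ⟨N, hN⟩ := exists_nat_ge C
      exact ⟨N, fun k hk => by push_cast; have : (N:ℝ) ≤ k := Nat.cast_le.2 hk; linarith⟩
  exact hcoef.smul_const (E i)

/-- The Cauchy-transform in the first variable of a parameterized holomorphic function is
holomorphic in all variables. -/
lemma cauchy_transform_differentiableOn {E : Type*} [NormedAddCommGroup E] [NormedSpace ℂ E]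
    [FiniteDimensional ℂ E] {g : ℂ × E → ℂ} {U : Set E} (hU : IsOpen U) {a r b : ℝ}
    (ha : 0 ≤ a) (har : a < r) (hrb : r < b)
    (hg : DifferentiableOn ℂ g
      {q : ℂ × E | a < ‖q.1‖ ∧ ‖q.1‖ < b ∧ q.2 ∈ U}) :
    DifferentiableOn ℂ (fun p : ℂ × E => ∮ ζ in C(0, r), (ζ - p.1)⁻¹ • g (ζ, p.2))
      {p : ℂ × E | ‖p.1‖ < r ∧ p.2 ∈ U} := by
  have hr0 : 0 < r := lt_of_le_of_lt ha har
  set O : Set (ℂ × E) := {p : ℂ × E | ‖p.1‖ < r ∧ p.2 ∈ U} with hO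
  have hOopen : IsOpen O := by
    refine IsOpen.inter ?_ (hU.preimage continuous_snd)
    exact isOpen_lt (continuous_norm.comp continuous_fst) continuous_const
  set gdom : Set (ℂ × E) :=
    {q : ℂ × E | a < ‖q.1‖ ∧ ‖q.1‖ < b ∧ q.2 ∈ U} with hgdom
  have habsC : ∀ θ : ℝ, ‖(circleMap 0 r θ)‖ = r := by
    intro θ; rw [norm_circleMap_zero, abs_of_pos hr0]
  have hCmem : ∀ (θ : ℝ) (x : E), x ∈ U → (circleMap 0 r θ, x) ∈ gdom := by
    intro θ x hx
    exact ⟨by rw [habsC]; exact har, by rw [habsC]; exact hrb, hx⟩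
  intro p₀ hp₀
  obtain ⟨ε₀, hε₀pos, hε₀⟩ := Metric.isOpen_iff.1 hOopen p₀ hp₀
  set ε := ε₀ / 9 with hε
  have hεpos : 0 < ε := by positivity
  have hsub : closedBall p₀ (8*ε) ⊆ O := by
    refine Subset.trans ?_ hε₀
    intro p hp
    rw [mem_closedBall] at hp
    rw [mem_ball]
    calc dist p p₀ ≤ 8*ε := hp
      _ < ε₀ := by rw [hε]; linarith
  set Φ : (ℂ × E) → ℝ → ℂ := fun p θ =>
    deriv (circleMap 0 r) θ • ((circleMap 0 r θ - p.1)⁻¹ • g (circleMap 0 r θ, p.2)) with hΦ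
  have hne : ∀ (θ : ℝ) (p : ℂ × E), p ∈ O → circleMap 0 r θ - p.1 ≠ 0 := by
    intro θ p hp h
    rw [sub_eq_zero] at h
    have := hp.1
    rw [← h, habsC] at this
    exact lt_irrefl _ this
  -- differentiability of Φ in p, for each θ
  have hψd : ∀ θ : ℝ, DifferentiableOn ℂ (fun p => Φ p θ) (ball p₀ (8*ε)) := by
    intro θ
    have hball : ball p₀ (8*ε) ⊆ O := Subset.trans ball_subset_closedBall hsub
    refine DifferentiableOn.fun_const_smul ?_ _
    refine DifferentiableOn.fun_smul ?_ ?_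
    · refine DifferentiableOn.fun_inv ?_ ?_
      · exact ((differentiable_const _).sub differentiable_fst).differentiableOn
      · exact fun p hp => hne θ p (hball hp)
    · refine DifferentiableOn.comp hg ?_ ?_
      · exact ((differentiable_const _).prodMk differentiable_snd).differentiableOn
      · exact fun p hp => hCmem θ p.2 (hball hp).2
  -- continuity of Φ in θ, for each p
  have hθc : ∀ p ∈ O, Continuous (fun θ => Φ p θ) := by
    intro p hp
    simp only [hΦ, deriv_circleMap]
    refine Continuous.fun_smul ((continuous_circleMap 0 r).mul continuous_const) ?_
    refine Continuous.fun_smul ?_ ?_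
    · refine Continuous.fun_inv₀ ((continuous_circleMap 0 r).sub continuous_const) ?_
      exact fun θ => hne θ p hp
    · refine hg.continuousOn.comp_continuous
        ((continuous_circleMap 0 r).prodMk continuous_const) ?_
      exact fun θ => hCmem θ p.2 hp.2
  -- uniform bound on a compact set
  obtain ⟨C, hC⟩ : ∃ C, ∀ q ∈ (closedBall p₀ (8*ε)) ×ˢ (Icc (0:ℝ) (2*Real.pi)),
      ‖Φ q.1 q.2‖ ≤ C := by
    refine ((isCompact_closedBall _ _).prod isCompact_Icc).exists_bound_of_continuousOn ?_
    have : (fun q : (ℂ × E) × ℝ => Φ q.1 q.2) = fun q =>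
        (circleMap 0 r q.2 * I) • ((circleMap 0 r q.2 - q.1.1)⁻¹ •
          g (circleMap 0 r q.2, q.1.2)) := by
      funext q; simp only [hΦ, deriv_circleMap]
    rw [this]
    refine ContinuousOn.fun_smul (((continuous_circleMap 0 r).comp continuous_snd).mul
      continuous_const).continuousOn ?_
    refine ContinuousOn.fun_smul ?_ ?_
    · refine ContinuousOn.fun_inv₀ (Continuous.continuousOn ?_) ?_
      · exact ((continuous_circleMap 0 r).comp continuous_snd).sub
          (continuous_fst.fst)
      · exact fun q hq => hne q.2 q.1 (hsub hq.1)
    · refine ContinuousOn.comp hg.continuousOn (Continuous.continuousOn ?_) ?_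
      · exact ((continuous_circleMap 0 r).comp continuous_snd).prodMk continuous_fst.snd
      · exact fun q hq => hCmem q.2 q.1.2 (hsub hq.1).2
  have hC0 : 0 ≤ C := le_trans (norm_nonneg _)
    (hC (p₀, 0) ⟨mem_closedBall_self (by positivity), ⟨le_refl 0, by positivity⟩⟩)
  -- the derivative under the integral
  have main : HasFDerivAt (fun p => ∫ θ in (0:ℝ)..(2*Real.pi), Φ p θ)
      (∫ θ in (0:ℝ)..(2*Real.pi), fderiv ℂ (fun p => Φ p θ) p₀) p₀ := by
    refine (intervalIntegral.hasFDerivAt_integral_of_dominated_loc_of_lip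
      (μ := MeasureTheory.volume) (F := Φ) (F' := fun θ => fderiv ℂ (fun p => Φ p θ) p₀)
      (bound := fun _ => C/(2*ε)) (ball_mem_nhds p₀ hεpos) ?_ ?_ ?_ ?_ ?_ ?_).2
    · filter_upwards [ball_mem_nhds p₀ (by positivity : (0:ℝ) < 8*ε)] with p hp
      exact (hθc p (Subset.trans ball_subset_closedBall hsub hp)).aestronglyMeasurable
    · exact (hθc p₀ hp₀).intervalIntegrable 0 (2*Real.pi)
    · refine MeasureTheory.StronglyMeasurable.aestronglyMeasurable ?_
      refine stronglyMeasurable_fderiv_param (δ := 8*ε) (by positivity) ?_ ?_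
      · exact fun y hy => hθc y (Subset.trans ball_subset_closedBall hsub hy)
      · exact fun θ => (hψd θ).differentiableAt
          (ball_mem_nhds p₀ (by positivity : (0:ℝ) < 8*ε))
    · refine MeasureTheory.ae_of_all _ fun θ hθ => ?_
      have hlip := lipschitz_of_bounded_holo (C := C) hεpos (hψd θ) ?_
      · have : Real.nnabs (C/(2*ε)) = Real.toNNReal (C/(2*ε)) :=
          Real.nnabs_of_nonneg (by positivity)
        rw [this]
        exact hlip
      · intro p hp
        refine hC (p, θ) ⟨ball_subset_closedBall hp, ?_⟩
        rw [uIoc_of_le (by positivity : (0:ℝ) ≤ 2*Real.pi)] at hθ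
        exact ⟨hθ.1.le, hθ.2⟩
    · exact intervalIntegrable_const
    · refine MeasureTheory.ae_of_all _ fun θ hθ => ?_
      exact ((hψd θ).differentiableAt
        (ball_mem_nhds p₀ (by positivity : (0:ℝ) < 8*ε))).hasFDerivAt
  have hfun : (fun p : ℂ × E => ∮ ζ in C(0, r), (ζ - p.1)⁻¹ • g (ζ, p.2))
      = fun p => ∫ θ in (0:ℝ)..(2*Real.pi), Φ p θ := by
    funext p
    simp only [circleIntegral, hΦ]
  rw [hfun]
  exact main.differentiableAt.differentiableWithinAt

/-- A bounded holomorphic function on a punctured disc is given by the Cauchy integral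
over an interior circle. -/
lemma cauchy_formula_of_bounded {g : ℂ → ℂ} {R r M : ℝ} (hr : 0 < r) (hrR : r < R)
    (hd : DifferentiableOn ℂ g (ball (0:ℂ) R \ {0}))
    (hb : ∀ z ∈ ball (0:ℂ) R \ {0}, ‖g z‖ ≤ M)
    {z : ℂ} (hz0 : z ≠ 0) (hzr : ‖z‖ < r) :
    g z = (2 * Real.pi * I)⁻¹ • ∮ ζ in C(0, r), (ζ - z)⁻¹ • g ζ := by
  have hR0 : 0 < R := lt_trans hr hrR
  set G : ℂ → ℂ := Function.update g 0 (limUnder (𝓝[≠] (0:ℂ)) g) with hG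
  have hGd : DifferentiableOn ℂ G (ball (0:ℂ) R) := by
    refine Complex.differentiableOn_update_limUnder_of_bddAbove
      (ball_mem_nhds 0 hR0) hd ?_
    refine ⟨M, ?_⟩
    rintro x ⟨y, hy, rfl⟩
    exact hb y hy
  have hGg : ∀ w : ℂ, w ≠ 0 → G w = g w := fun w hw => Function.update_of_ne hw _ _
  have hcl : DiffContOnCl ℂ G (ball (0:ℂ) r) := by
    refine DifferentiableOn.diffContOnCl (hGd.mono ?_)
    rw [closure_ball (0:ℂ) hr.ne']
    intro x hx
    rw [mem_closedBall, dist_zero_right] at hx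
    rw [mem_ball, dist_zero_right]
    exact lt_of_le_of_lt hx hrR
  have hform : (∮ ζ in C(0, r), (ζ - z)⁻¹ • G ζ) = (2 * Real.pi * I) • G z :=
    hcl.circleIntegral_sub_inv_smul (by rwa [mem_ball, dist_zero_right])
  have hcongr : (∮ ζ in C(0, r), (ζ - z)⁻¹ • G ζ) = ∮ ζ in C(0, r), (ζ - z)⁻¹ • g ζ := by
    refine circleIntegral.integral_congr hr.le fun ζ hζ => ?_
    rw [mem_sphere, dist_zero_right] at hζ
    have : ζ ≠ 0 := by intro h; rw [h, norm_zero] at hζ; exact hr.ne hζ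
    rw [hGg ζ this]
  rw [← hcongr, hform, ← hGg z hz0, smul_smul,
    inv_mul_cancel₀ Complex.two_pi_I_ne_zero, one_smul]

private lemma mem_ball0 {x : ℂ} {R : ℝ} : x ∈ ball (0:ℂ) R ↔ ‖x‖ < R := by
  rw [mem_ball, dist_zero_right]

private lemma mem_pball {x : ℂ} {R : ℝ} :
    x ∈ ball (0:ℂ) R \ {0} ↔ 0 < ‖x‖ ∧ ‖x‖ < R := by
  rw [mem_diff, mem_ball0, mem_singleton_iff]
  constructor
  · rintro ⟨h1, h2⟩; exact ⟨norm_pos_iff.2 h2, h1⟩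
  · rintro ⟨h1, h2⟩; exact ⟨h2, norm_pos_iff.1 h1⟩

set_option maxHeartbeats 2000000 in
/-- Families holomorphic extension lemma (coefficient version): a coefficient function
`f(z,w,s)` holomorphic on `V' × S`, bounded uniformly in the parameter `s` by `M` on the
outer band `{ρ₁c ≤ |z| ≤ ρ₂c}` and on the inner band `{ρ₁c' ≤ |w| ≤ ρ₂c'}`, extends
uniquely to a holomorphic function on `{|z| < ρ₂c, |w| < ρ₂c'} × S`. -/
theorem families_holomorphic_extension
    (c c' ρ₁ ρ₂ M : ℝ) (hc : 0 < c) (hc' : 0 < c')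
    (hρ₁ : 0 < ρ₁) (hρ : ρ₁ < ρ₂) (hρ₂ : ρ₂ < 1) (hM : 0 < M)
    (n : ℕ) (S : Set (Fin n → ℂ)) (hS : IsOpen S)
    (f : ℂ × ℂ × (Fin n → ℂ) → ℂ)
    (hf : DifferentiableOn ℂ f
      {q : ℂ × ℂ × (Fin n → ℂ) | (0 < ‖q.1‖ ∧ ‖q.1‖ < c) ∧
        (0 < ‖q.2.1‖ ∧ ‖q.2.1‖ < c') ∧ q.2.2 ∈ S})
    (hband_z : ∀ q : ℂ × ℂ × (Fin n → ℂ),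
      ((0 < ‖q.1‖ ∧ ‖q.1‖ < c) ∧
        (0 < ‖q.2.1‖ ∧ ‖q.2.1‖ < c') ∧ q.2.2 ∈ S) →
      ρ₁ * c ≤ ‖q.1‖ → ‖q.1‖ ≤ ρ₂ * c → ‖(f q)‖ ≤ M)
    (hband_w : ∀ q : ℂ × ℂ × (Fin n → ℂ),
      ((0 < ‖q.1‖ ∧ ‖q.1‖ < c) ∧
        (0 < ‖q.2.1‖ ∧ ‖q.2.1‖ < c') ∧ q.2.2 ∈ S) →
      ρ₁ * c' ≤ ‖q.2.1‖ → ‖q.2.1‖ ≤ ρ₂ * c' →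
      ‖(f q)‖ ≤ M) :
    ∃ F : ℂ × ℂ × (Fin n → ℂ) → ℂ,
      (DifferentiableOn ℂ F
        {q : ℂ × ℂ × (Fin n → ℂ) | ‖q.1‖ < ρ₂ * c ∧
          ‖q.2.1‖ < ρ₂ * c' ∧ q.2.2 ∈ S} ∧
        ∀ q : ℂ × ℂ × (Fin n → ℂ),
          (0 < ‖q.1‖ ∧ ‖q.1‖ < ρ₂ * c) →
          (0 < ‖q.2.1‖ ∧ ‖q.2.1‖ < ρ₂ * c') → q.2.2 ∈ S →
          F q = f q) ∧
      ∀ G : ℂ × ℂ × (Fin n → ℂ) → ℂ,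
        (DifferentiableOn ℂ G
          {q : ℂ × ℂ × (Fin n → ℂ) | ‖q.1‖ < ρ₂ * c ∧
            ‖q.2.1‖ < ρ₂ * c' ∧ q.2.2 ∈ S} ∧
          ∀ q : ℂ × ℂ × (Fin n → ℂ),
            (0 < ‖q.1‖ ∧ ‖q.1‖ < ρ₂ * c) →
            (0 < ‖q.2.1‖ ∧ ‖q.2.1‖ < ρ₂ * c') → q.2.2 ∈ S →
            G q = f q) →
        ∀ q : ℂ × ℂ × (Fin n → ℂ),
          ‖q.1‖ < ρ₂ * c → ‖q.2.1‖ < ρ₂ * c' → q.2.2 ∈ S →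
          G q = F q := by
  classical
  have hρ₂0 : 0 < ρ₂ := lt_trans hρ₁ hρ
  obtain ⟨r, hρ₂cr, hrc⟩ : ∃ r : ℝ, ρ₂ * c < r ∧ r < c :=
    ⟨(ρ₂*c + c)/2, by nlinarith, by nlinarith⟩
  obtain ⟨r', hρ₂cr', hrc'⟩ : ∃ r' : ℝ, ρ₂ * c' < r' ∧ r' < c' :=
    ⟨(ρ₂*c' + c')/2, by nlinarith, by nlinarith⟩
  have hr0 : 0 < r := lt_trans (by positivity) hρ₂cr
  have hr0' : 0 < r' := lt_trans (by positivity) hρ₂cr'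
  -- Step A : Cauchy transform in the first variable
  set UA : Set (ℂ × (Fin n → ℂ)) :=
    {x : ℂ × (Fin n → ℂ) | (0 < ‖x.1‖ ∧ ‖x.1‖ < c') ∧ x.2 ∈ S} with hUA
  have hUAopen : IsOpen UA := by
    refine IsOpen.and (IsOpen.and ?_ ?_) (hS.preimage continuous_snd)
    · exact isOpen_lt continuous_const (continuous_norm.comp continuous_fst)
    · exact isOpen_lt (continuous_norm.comp continuous_fst) continuous_const
  set FA : ℂ × ℂ × (Fin n → ℂ) → ℂ := fun p =>
    (2 * Real.pi * I)⁻¹ • ∮ ζ in C(0, r), (ζ - p.1)⁻¹ • f (ζ, p.2) with hFA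
  set A : Set (ℂ × ℂ × (Fin n → ℂ)) :=
    {p : ℂ × ℂ × (Fin n → ℂ) | ‖p.1‖ < r ∧ p.2 ∈ UA} with hA
  have hFAd : DifferentiableOn ℂ FA A := by
    refine DifferentiableOn.fun_const_smul ?_ _
    refine cauchy_transform_differentiableOn hUAopen
      (a := r/2) (b := (r+c)/2) (by positivity) (by linarith) (by linarith) ?_
    refine hf.mono ?_
    rintro q ⟨h1, h2, h3⟩
    exact ⟨⟨lt_trans (by positivity) h1, by linarith⟩, h3.1, h3.2⟩
  -- Claim A : FA = f off the z-axis
  have claimA : ∀ q : ℂ × ℂ × (Fin n → ℂ), 0 < ‖q.1‖ → ‖q.1‖ < r →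
      0 < ‖q.2.1‖ → ‖q.2.1‖ < c' → q.2.2 ∈ S → FA q = f q := by
    have hmid : ∀ w : ℂ, ∀ s, ρ₁ * c' < ‖w‖ → ‖w‖ < ρ₂ * c' → s ∈ S →
        ∀ z : ℂ, 0 < ‖z‖ → ‖z‖ < r → f (z, w, s) = FA (z, w, s) := by
      intro w s hw1 hw2 hs z hz0 hzr
      have hwc' : ‖w‖ < c' := by nlinarith
      have hw0 : 0 < ‖w‖ := lt_trans (by positivity) hw1
      have := cauchy_formula_of_bounded (g := fun ζ => f (ζ, w, s)) (R := c) (M := M)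
        hr0 hrc ?_ ?_ (z := z) ?_ hzr
      · exact this
      · refine DifferentiableOn.comp (t :=
          {q : ℂ × ℂ × (Fin n → ℂ) | (0 < ‖q.1‖ ∧ ‖q.1‖ < c) ∧
            (0 < ‖q.2.1‖ ∧ ‖q.2.1‖ < c') ∧ q.2.2 ∈ S}) hf
          ((differentiable_id.prodMk
            ((differentiable_const w).prodMk (differentiable_const s))).differentiableOn) ?_
        intro ζ hζ
        rw [mem_pball] at hζ
        exact ⟨hζ, ⟨hw0, hwc'⟩, hs⟩
      · intro ζ hζ
        rw [mem_pball] at hζ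
        show ‖f (ζ, w, s)‖ ≤ M
        exact hband_w (ζ, w, s) ⟨hζ, ⟨hw0, hwc'⟩, hs⟩ hw1.le hw2.le
      · exact norm_pos_iff.1 hz0
    rintro ⟨z, w, s⟩ hz0 hzr hw0 hwc' hs
    simp only at hz0 hzr hw0 hwc' hs
    set v : ℂ → ℂ := fun w' => f (z, w', s) - FA (z, w', s) with hv
    have hslice : Differentiable ℂ (fun w' : ℂ => ((z, w', s) : ℂ × ℂ × (Fin n → ℂ))) :=
      (differentiable_const z).prodMk (differentiable_id.prodMk (differentiable_const s))
    have hvd : DifferentiableOn ℂ v (ball (0:ℂ) c' \ {0}) := by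
      refine DifferentiableOn.sub ?_ ?_
      · refine DifferentiableOn.comp (t :=
          {q : ℂ × ℂ × (Fin n → ℂ) | (0 < ‖q.1‖ ∧ ‖q.1‖ < c) ∧
            (0 < ‖q.2.1‖ ∧ ‖q.2.1‖ < c') ∧ q.2.2 ∈ S}) hf
          hslice.differentiableOn ?_
        intro w' hw'
        rw [mem_pball] at hw'
        exact ⟨⟨hz0, lt_trans hzr hrc⟩, hw', hs⟩
      · refine DifferentiableOn.comp (g := FA) (t := A) hFAd hslice.differentiableOn ?_
        intro w' hw'
        rw [mem_pball] at hw'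
        exact ⟨hzr, hw', hs⟩
    set V : Set ℂ := {w' : ℂ | ρ₁ * c' < ‖w'‖ ∧ ‖w'‖ < ρ₂ * c'} with hV
    have hVopen : IsOpen V := IsOpen.and
      (isOpen_lt continuous_const continuous_norm)
      (isOpen_lt continuous_norm continuous_const)
    have hw₁ : (((ρ₁*c' + ρ₂*c')/2 : ℝ) : ℂ) ∈ V := by
      have habs : ‖(((ρ₁*c' + ρ₂*c')/2 : ℝ) : ℂ)‖ = (ρ₁*c' + ρ₂*c')/2 := by
        rw [Complex.norm_real, Real.norm_eq_abs, abs_of_pos (by positivity)]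
      constructor <;> rw [habs] <;> nlinarith
    have hVsub : V ⊆ ball (0:ℂ) c' \ {0} := by
      intro w' hw'
      rw [mem_pball]
      exact ⟨lt_trans (by positivity) hw'.1, by nlinarith [hw'.2]⟩
    have hvan : EqOn v 0 V := by
      intro w' hw'
      have := hmid w' s hw'.1 hw'.2 hs z hz0 hzr
      show f (z, w', s) - FA (z, w', s) = 0
      rw [this, sub_self]
    have hvanΩ := eqOn_zero_of_eqOn_open (isOpen_ball.sdiff isClosed_singleton)
      (punctured_ball_preconnected hc') hvd hVopen hw₁ hVsub hvan
    have hvw : v w = 0 := hvanΩ (by rw [mem_pball]; exact ⟨hw0, hwc'⟩)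
    have : f (z, w, s) - FA (z, w, s) = 0 := hvw
    exact (sub_eq_zero.1 this).symm
  -- Step B : Cauchy transform in the second variable
  set UB : Set (ℂ × (Fin n → ℂ)) :=
    {x : ℂ × (Fin n → ℂ) | ‖x.1‖ < r ∧ x.2 ∈ S} with hUB
  have hUBopen : IsOpen UB := IsOpen.and
    (isOpen_lt (continuous_norm.comp continuous_fst) continuous_const)
    (hS.preimage continuous_snd)
  set gB : ℂ × ℂ × (Fin n → ℂ) → ℂ := fun q => FA (q.2.1, q.1, q.2.2) with hgB
  have hswap : Differentiable ℂ (fun q : ℂ × ℂ × (Fin n → ℂ) =>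
      ((q.2.1, q.1, q.2.2) : ℂ × ℂ × (Fin n → ℂ))) :=
    (differentiable_snd.fst).prodMk (differentiable_fst.prodMk differentiable_snd.snd)
  have hgBd : DifferentiableOn ℂ gB
      {q : ℂ × ℂ × (Fin n → ℂ) | r'/2 < ‖q.1‖ ∧
        ‖q.1‖ < (r'+c')/2 ∧ q.2 ∈ UB} := by
    refine DifferentiableOn.comp (g := FA) (t := A) hFAd hswap.differentiableOn ?_
    rintro q ⟨h1, h2, h3⟩
    exact ⟨h3.1, ⟨lt_trans (by positivity) h1, by linarith⟩, h3.2⟩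
  set TB : ℂ × ℂ × (Fin n → ℂ) → ℂ :=
    fun p => ∮ η in C(0, r'), (η - p.1)⁻¹ • gB (η, p.2) with hTB
  have hTBd : DifferentiableOn ℂ TB
      {p : ℂ × ℂ × (Fin n → ℂ) | ‖p.1‖ < r' ∧ p.2 ∈ UB} :=
    cauchy_transform_differentiableOn hUBopen
      (a := r'/2) (b := (r'+c')/2) (by positivity) (by linarith) (by linarith) hgBd
  set F : ℂ × ℂ × (Fin n → ℂ) → ℂ := fun q =>
    (2 * Real.pi * I)⁻¹ • TB (q.2.1, q.1, q.2.2) with hF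
  have hFd : DifferentiableOn ℂ F
      {q : ℂ × ℂ × (Fin n → ℂ) | ‖q.1‖ < r ∧
        ‖q.2.1‖ < r' ∧ q.2.2 ∈ S} := by
    refine DifferentiableOn.fun_const_smul ?_ _
    refine DifferentiableOn.comp (g := TB)
      (t := {p : ℂ × ℂ × (Fin n → ℂ) | ‖p.1‖ < r' ∧ p.2 ∈ UB})
      hTBd hswap.differentiableOn ?_
    rintro q ⟨h1, h2, h3⟩
    exact ⟨h2, h1, h3⟩
  -- Claim B : F = FA off the w-axis
  have claimB : ∀ q : ℂ × ℂ × (Fin n → ℂ), ‖q.1‖ < r →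
      0 < ‖q.2.1‖ → ‖q.2.1‖ < r' → q.2.2 ∈ S → F q = FA q := by
    have hmidB : ∀ z : ℂ, ∀ s, ρ₁ * c < ‖z‖ → ‖z‖ < ρ₂ * c → s ∈ S →
        ∀ w : ℂ, 0 < ‖w‖ → ‖w‖ < r' → FA (z, w, s) = F (z, w, s) := by
      intro z s hz1 hz2 hs w hw0 hwr'
      have hz0 : 0 < ‖z‖ := lt_trans (by positivity) hz1
      have hzr : ‖z‖ < r := lt_trans hz2 hρ₂cr
      have hslice : Differentiable ℂ (fun w' : ℂ => ((z, w', s) : ℂ × ℂ × (Fin n → ℂ))) :=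
        (differentiable_const z).prodMk (differentiable_id.prodMk (differentiable_const s))
      have := cauchy_formula_of_bounded (g := fun w' => FA (z, w', s)) (R := c') (M := M)
        hr0' hrc' ?_ ?_ (z := w) ?_ hwr'
      · exact this
      · refine DifferentiableOn.comp (g := FA) (t := A) hFAd hslice.differentiableOn ?_
        intro w' hw'
        rw [mem_pball] at hw'
        exact ⟨hzr, hw', hs⟩
      · intro w' hw'
        rw [mem_pball] at hw'
        show ‖FA (z, w', s)‖ ≤ M
        rw [claimA (z, w', s) hz0 hzr hw'.1 hw'.2 hs]
        refine hband_z (z, w', s) ⟨⟨hz0, by nlinarith⟩, hw', hs⟩ hz1.le hz2.le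
      · exact norm_pos_iff.1 hw0
    rintro ⟨z, w, s⟩ hzr hw0 hwr' hs
    simp only at hzr hw0 hwr' hs
    set u : ℂ → ℂ := fun z' => FA (z', w, s) - F (z', w, s) with hu
    have hslice : Differentiable ℂ (fun z' : ℂ => ((z', w, s) : ℂ × ℂ × (Fin n → ℂ))) :=
      differentiable_id.prodMk ((differentiable_const w).prodMk (differentiable_const s))
    have hud : DifferentiableOn ℂ u (ball (0:ℂ) r) := by
      refine DifferentiableOn.sub ?_ ?_
      · refine DifferentiableOn.comp (g := FA) (t := A) hFAd hslice.differentiableOn ?_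
        intro z' hz'
        rw [mem_ball0] at hz'
        exact ⟨hz', ⟨hw0, lt_trans hwr' hrc'⟩, hs⟩
      · refine DifferentiableOn.comp (g := F) (t := {q : ℂ × ℂ × (Fin n → ℂ) |
          ‖q.1‖ < r ∧ ‖q.2.1‖ < r' ∧ q.2.2 ∈ S})
          hFd hslice.differentiableOn ?_
        intro z' hz'
        rw [mem_ball0] at hz'
        exact ⟨hz', hwr', hs⟩
    set V : Set ℂ := {z' : ℂ | ρ₁ * c < ‖z'‖ ∧ ‖z'‖ < ρ₂ * c} with hV
    have hVopen : IsOpen V := IsOpen.and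
      (isOpen_lt continuous_const continuous_norm)
      (isOpen_lt continuous_norm continuous_const)
    have hz₁ : (((ρ₁*c + ρ₂*c)/2 : ℝ) : ℂ) ∈ V := by
      have habs : ‖(((ρ₁*c + ρ₂*c)/2 : ℝ) : ℂ)‖ = (ρ₁*c + ρ₂*c)/2 := by
        rw [Complex.norm_real, Real.norm_eq_abs, abs_of_pos (by positivity)]
      constructor <;> rw [habs] <;> nlinarith
    have hVsub : V ⊆ ball (0:ℂ) r := by
      intro z' hz'
      rw [mem_ball0]
      exact lt_trans hz'.2 hρ₂cr
    have hvan : EqOn u 0 V := by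
      intro z' hz'
      show FA (z', w, s) - F (z', w, s) = 0
      rw [hmidB z' s hz'.1 hz'.2 hs w hw0 hwr', sub_self]
    have hvanΩ := eqOn_zero_of_eqOn_open isOpen_ball (convex_ball (0:ℂ) r).isPreconnected
      hud hVopen hz₁ hVsub hvan
    have huz : u z = 0 := hvanΩ (by rw [mem_ball0]; exact hzr)
    have : FA (z, w, s) - F (z, w, s) = 0 := huz
    exact (sub_eq_zero.1 this).symm
  -- the target region
  set Ω : Set (ℂ × ℂ × (Fin n → ℂ)) := {q : ℂ × ℂ × (Fin n → ℂ) |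
    ‖q.1‖ < ρ₂ * c ∧ ‖q.2.1‖ < ρ₂ * c' ∧ q.2.2 ∈ S} with hΩ
  have hΩopen : IsOpen Ω := by
    refine IsOpen.and ?_ (IsOpen.and ?_ (hS.preimage (continuous_snd.snd)))
    · exact isOpen_lt (continuous_norm.comp continuous_fst) continuous_const
    · exact isOpen_lt (continuous_norm.comp (continuous_snd.fst)) continuous_const
  have hFf : ∀ q : ℂ × ℂ × (Fin n → ℂ),
      (0 < ‖q.1‖ ∧ ‖q.1‖ < ρ₂ * c) →
      (0 < ‖q.2.1‖ ∧ ‖q.2.1‖ < ρ₂ * c') → q.2.2 ∈ S → F q = f q := by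
    rintro q ⟨hz0, hzρ⟩ ⟨hw0, hwρ⟩ hs
    rw [claimB q (lt_trans hzρ hρ₂cr) hw0 (lt_trans hwρ hρ₂cr') hs]
    exact claimA q hz0 (lt_trans hzρ hρ₂cr) hw0 (by nlinarith) hs
  refine ⟨F, ⟨hFd.mono ?_, hFf⟩, ?_⟩
  · rintro q ⟨h1, h2, h3⟩
    exact ⟨lt_trans h1 hρ₂cr, lt_trans h2 hρ₂cr', h3⟩
  -- uniqueness
  rintro G ⟨hGd, hGf⟩ q hq1 hq2 hq3
  have hq : q ∈ Ω := ⟨hq1, hq2, hq3⟩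
  set L : Filter ℝ := nhdsWithin (0:ℝ) (Set.Ioi (0:ℝ)) with hL
  have hLle : L ≤ 𝓝 (0:ℝ) := nhdsWithin_le_nhds
  have hLne : L.NeBot := by rw [hL]; infer_instance
  set γ : ℝ → ℂ × ℂ × (Fin n → ℂ) := fun t => (q.1 + t, q.2.1 + t, q.2.2) with hγ
  have hγc : Continuous γ := by
    refine Continuous.prodMk (continuous_const.add Complex.continuous_ofReal) ?_
    exact Continuous.prodMk (continuous_const.add Complex.continuous_ofReal) continuous_const
  have hγ0 : γ 0 = q := by
    simp only [hγ, Complex.ofReal_zero, add_zero]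
  have h1 : Tendsto γ (L) (𝓝 q) := by
    have := hγc.tendsto 0
    rw [hγ0] at this
    exact this.mono_left hLle
  have h2 : ∀ᶠ t in L, γ t ∈ Ω := h1 (hΩopen.mem_nhds hq)
  have hax : ∀ z : ℂ, ∀ᶠ t : ℝ in L, z + (t:ℂ) ≠ 0 := by
    intro z
    rcases eq_or_ne z 0 with rfl | hz
    · filter_upwards [(by rw [hL]; exact self_mem_nhdsWithin : Set.Ioi (0:ℝ) ∈ L)] with t ht
      rw [zero_add]
      exact Complex.ofReal_ne_zero.mpr (ne_of_gt (mem_Ioi.1 ht))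
    · have habs : 0 < ‖z‖ := norm_pos_iff.2 hz
      have hev : ∀ᶠ t : ℝ in 𝓝 (0:ℝ), ‖(t:ℂ)‖ < ‖z‖ := by
        have hcont : Continuous fun t : ℝ => ‖(t:ℂ)‖ :=
          continuous_norm.comp Complex.continuous_ofReal
        have h0 : ‖((0:ℝ):ℂ)‖ < ‖z‖ := by simpa using habs
        exact (isOpen_lt hcont continuous_const).mem_nhds (by simpa using habs)
      refine (hev.filter_mono hLle).mono fun t ht => ?_
      intro h
      have heq : (t:ℂ) = -z := by linear_combination h
      rw [heq] at ht
      simp at ht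
  have h3 : ∀ᶠ t in L, G (γ t) = F (γ t) := by
    filter_upwards [h2, hax q.1, hax q.2.1] with t ht hz hw
    have hz0 : 0 < ‖(γ t).1‖ := norm_pos_iff.2 hz
    have hw0 : 0 < ‖(γ t).2.1‖ := norm_pos_iff.2 hw
    rw [hGf (γ t) ⟨hz0, ht.1⟩ ⟨hw0, ht.2.1⟩ ht.2.2,
      ← hFf (γ t) ⟨hz0, ht.1⟩ ⟨hw0, ht.2.1⟩ ht.2.2]
  have hγΩ : Tendsto γ (L) (𝓝[Ω] q) := by
    rw [tendsto_nhdsWithin_iff]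
    exact ⟨h1, h2⟩
  have hGq : Tendsto (fun t => G (γ t)) (L) (𝓝 (G q)) :=
    ((hGd.continuousOn q hq).tendsto).comp hγΩ
  have hFq : Tendsto (fun t => F (γ t)) (L) (𝓝 (F q)) := by
    refine (((hFd.mono ?_).continuousOn q hq).tendsto).comp hγΩ
    rintro p ⟨hp1, hp2, hp3⟩
    exact ⟨lt_trans hp1 hρ₂cr, lt_trans hp2 hρ₂cr', hp3⟩
  exact tendsto_nhds_unique (hGq.congr' h3) hFq
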